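/- Suppose G and H are two 2-balanced graphs such that their intersection G ∩ H is a single edge (i.e., V(G) ∩ V(H) consists of exactly two vertices that are joined by an edge belonging to both G and H). If m₂(G) = m₂(H) = d, then the union G ∪ H is 2-balanced with m₂(G ∪ H) = d. -/

import Mathlib

open Filter Asymptotics
open scoped Classical ENNReal

noncomputable section

namespace OG

/-! ### Finite graphs, represented as subgraphs of a complete graph -/

abbrev Sub (W : Type*) := (⊤ : SimpleGraph W).Subgraph

variable {W U X : Type*}

/-- number of vertices -/
def nverts (G : Sub W) : ℕ := G.verts.ncard

/-- number of edges -/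
def nedges (G : Sub W) : ℕ := G.edgeSet.ncard

/-- the density `d(G) = e_G / v_G` -/
def dd (G : Sub W) : ℝ := (nedges G : ℝ) / (nverts G : ℝ)

/-- the `1`-density `d₁(G) = e_G / (v_G - 1)` -/
def d1 (G : Sub W) : ℝ := (nedges G : ℝ) / ((nverts G : ℝ) - 1)

/-- the `2`-density `d₂(G) = (e_G - 1)/(v_G - 2)` -/
def d2 (G : Sub W) : ℝ := ((nedges G : ℝ) - 1) / ((nverts G : ℝ) - 2)

/-- `m(G) = max_{H ⊆ G} d(H)` -/
def mD (G : Sub W) : ℝ := ⨆ H : {H : Sub W // H ≤ G}, dd H.1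

/-- `m₁(G) = max_{H ⊆ G} d₁(H)` -/
def m1D (G : Sub W) : ℝ := ⨆ H : {H : Sub W // H ≤ G}, d1 H.1

/-- `m₂(G) = max_{H ⊆ G} d₂(H)` (over subgraphs with at least one edge;
on edgeless subgraphs the convention `0/0 = 0` applies) -/
def m2D (G : Sub W) : ℝ := ⨆ H : {H : Sub W // H ≤ G ∧ 1 ≤ nedges H}, d2 H.1

/-- `G` is 2-balanced if `m₂(G) = d₂(G)`. -/
def TwoBalanced (G : Sub W) : Prop := m2D G = d2 G

/-- the recursively defined densities `m̄ʳ₂(G)`. -/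
def mbar (G : Sub W) : ℕ → ℝ
  | 0 => 0
  | 1 => mD G
  | k + 2 => ⨆ H : {H : Sub W // H ≤ G},
      (nedges H.1 : ℝ) / ((nverts H.1 : ℝ) - 2 + 1 / mbar G (k + 1))

/-- view a `SimpleGraph` on a vertex type `V` as a graph with vertex set all of `V`. -/
def toSub {V : Type*} (G : SimpleGraph V) : Sub V where
  verts := Set.univ
  Adj := G.Adj
  adj_sub := fun h => G.ne_of_adj h
  edge_vert := fun _ => Set.mem_univ _
  symm := G.symm

/-! ### Rooted graphs -/

/-- number of edges of `G` inside the root set `R`, i.e. `e_{G[R]}`. -/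
def rInEdges (R : Set W) (G : Sub W) : ℕ := {e ∈ G.edgeSet | ∀ x ∈ e, x ∈ R}.ncard

/-- the density `d(R,G) = ē_G / v̄_G` of a rooted graph (with the roots `R ∩ V(G)`). -/
def rdd (R : Set W) (G : Sub W) : ℝ :=
  ((nedges G : ℝ) - (rInEdges R G : ℝ)) / ((nverts G : ℝ) - ((G.verts ∩ R).ncard : ℝ))

/-- `m(R,G) = max_{H ⊆ G} d(R ∩ V(H), H)` -/
def mRooted (R : Set W) (G : Sub W) : ℝ := ⨆ H : {H : Sub W // H ≤ G}, rdd R H.1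

/-- a rooted graph is balanced if its density attains `m(R,G)`. -/
def BalancedRooted (R : Set W) (G : Sub W) : Prop := mRooted R G = rdd R G

/-- the rooted `2`-density `d₂(R,G,t)`, valued in `ℝ≥0∞`. -/
def d2t (R : Set W) (G : Sub W) (t : ℝ) : ℝ≥0∞ :=
  if 0 < (nverts G : ℝ) - 2 - t * (rInEdges R G : ℝ) then
    ENNReal.ofReal ((((nedges G : ℝ) - (rInEdges R G : ℝ)) - 1) /
      ((nverts G : ℝ) - 2 - t * (rInEdges R G : ℝ)))
  else ⊤

/-- `m₂(R,G,t)`, the maximum of `d₂(R ∩ V(H), H, t)` over subgraphs `H ⊆ G` with `ē_H > 1`. -/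
def m2t (R : Set W) (G : Sub W) (t : ℝ) : ℝ≥0∞ :=
  ⨆ H : {H : Sub W // H ≤ G ∧ rInEdges R H + 2 ≤ nedges H}, d2t R H.1 t


/-! ### Products of rooted graphs and the families 𝓕ᵏ -/

/-- `e` is a non-root edge of `Fg` w.r.t. the root set `R`. -/
def NRe (Fg : Sub W) (R : Set W) (e : Sym2 W) : Prop := e ∈ Fg.edgeSet ∧ ¬ ∀ x ∈ e, x ∈ R

/-- `P` (together with the placement maps `φ`, `ψ`) is a copy of the product `(R,Fg) × (h₁h₂, H)`:
it is obtained from `Fg` by attaching to every non-root edge of `Fg` a new copy of `H`,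
rooted at that edge (the edge itself being kept iff `h₁h₂ ∈ E(H)`). -/
def IsProdCopyData (Fg : Sub W) (R : Set W) (H : Sub U) (h₁ h₂ : U) (P : Sub X)
    (φ : W → X) (ψ : Sym2 W → U → X) : Prop :=
  Set.InjOn φ Fg.verts ∧
  (∀ e, NRe Fg R e → Set.InjOn (ψ e) H.verts) ∧
  (∀ e, NRe Fg R e → ∀ x y : W, e = Sym2.mk x y →
      ({ψ e h₁, ψ e h₂} : Set X) = {φ x, φ y}) ∧
  (∀ e e', NRe Fg R e → NRe Fg R e' → e ≠ e' →
      Disjoint (ψ e '' (H.verts \ {h₁, h₂})) (ψ e' '' (H.verts \ {h₁, h₂}))) ∧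
  (∀ e, NRe Fg R e → Disjoint (ψ e '' (H.verts \ {h₁, h₂})) (φ '' Fg.verts)) ∧
  (P.verts = φ '' Fg.verts ∪ ⋃ e ∈ {e | NRe Fg R e}, ψ e '' H.verts) ∧
  (∀ x y, P.Adj x y ↔
    ((∃ p q, Fg.Adj p q ∧ p ∈ R ∧ q ∈ R ∧ x = φ p ∧ y = φ q) ∨
      ∃ e, NRe Fg R e ∧ ∃ p q, H.Adj p q ∧ x = ψ e p ∧ y = ψ e q))

/-- `P` is a copy of the product `(R,Fg) × (h₁h₂, H)` placed by `φ`. -/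
def IsProdCopy (Fg : Sub W) (R : Set W) (H : Sub U) (h₁ h₂ : U) (P : Sub X) (φ : W → X) : Prop :=
  ∃ ψ, IsProdCopyData Fg R H h₁ h₂ P φ ψ

/-- `InF F u v k G a b` : the graph `G` rooted at `(a, b)` is (a copy of) a member of
the family `𝓕ᵏ` built from the graph `F` with distinguished edge `{u,v}`.
`𝓕¹` consists of a single edge rooted at its endpoints, and for `k ≥ 2`,
`𝓕ᵏ = { ⊔_{1 ≤ i < k} (e,F)×(eᵢ,Fᵢ*) : Fᵢ* ∈ 𝓕^{≤i} }`, the parts being joined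
at the common roots and otherwise disjoint. -/
inductive InF (F : Sub ℕ) (u v : ℕ) : ℕ → Sub ℕ → ℕ → ℕ → Prop
  | base (a b : ℕ) (G : Sub ℕ) (hab : a ≠ b) (hv : G.verts = {a, b})
      (he : G.edgeSet = {Sym2.mk a b}) : InF F u v 1 G a b
  | step (k a b : ℕ) (P : ℕ → Sub ℕ) (G : Sub ℕ)
      (j : ℕ → ℕ) (Fi : ℕ → Sub ℕ) (c d : ℕ → ℕ) (φ : ℕ → ℕ → ℕ)
      (hk : 2 ≤ k)
      (hj : ∀ i, 1 ≤ i → i < k → 1 ≤ j i ∧ j i ≤ i)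
      (hrec : ∀ i, 1 ≤ i → i < k → InF F u v (j i) (Fi i) (c i) (d i))
      (hprod : ∀ i, 1 ≤ i → i < k →
        IsProdCopy F {u, v} (Fi i) (c i) (d i) (P i) (φ i) ∧
          ({φ i u, φ i v} : Set ℕ) = {a, b})
      (hdisj : ∀ i i', 1 ≤ i → i < k → 1 ≤ i' → i' < k → i ≠ i' →
        (P i).verts ∩ (P i').verts = {a, b})
      (hG : G = ⨆ i ∈ Set.Ico 1 k, P i) : InF F u v k G a b

/-- membership in `𝓕^{≤ m} = ∪_{1 ≤ j ≤ m} 𝓕ʲ`. -/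
def InFle (F : Sub ℕ) (u v : ℕ) (m : ℕ) (G : Sub ℕ) (a b : ℕ) : Prop :=
  ∃ j, 1 ≤ j ∧ j ≤ m ∧ InF F u v j G a b


/-! ### Partite graphs, regularity -/

/-- number of edges of a `SimpleGraph`. -/
def eCnt {V : Type*} (G : SimpleGraph V) : ℕ := G.edgeSet.ncard

/-- number of edges of `G` having all endpoints inside `R`, i.e. `e_{G[R]}`. -/
def eIn {V : Type*} (G : SimpleGraph V) (R : Finset V) : ℕ :=
  {e ∈ G.edgeSet | ∀ x ∈ e, x ∈ R}.ncard

/-- `F₋`: the graph `F` with all edges inside the root set `R` removed. -/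
def Fm {V : Type*} (F : SimpleGraph V) (R : Finset V) : SimpleGraph V :=
  F.deleteEdges {e | ∀ x ∈ e, x ∈ R}

/-- edge density of the bipartite pair `(s,t)` in `G`. -/
def bidensity {V : Type*} (G : SimpleGraph V) (s t : Finset V) : ℝ :=
  ({pq : V × V | pq.1 ∈ s ∧ pq.2 ∈ t ∧ G.Adj pq.1 pq.2}.ncard : ℝ) /
    ((s.card : ℝ) * (t.card : ℝ))

/-- the pair `(s,t)` is `(ε)`-regular in `G`: for all `s' ⊆ s`, `t' ⊆ t` with
`|s'| ≥ ε|s|`, `|t'| ≥ ε|t|` the density deviates by at most `ε` times the density of the pair. -/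
def EpsRegular {V : Type*} (G : SimpleGraph V) (ε : ℝ) (s t : Finset V) : Prop :=
  ∀ s' t' : Finset V, s' ⊆ s → t' ⊆ t → ε * s.card ≤ s'.card → ε * t.card ≤ t'.card →
    |bidensity G s' t' - bidensity G s t| ≤ ε * bidensity G s t

/-- the `i`-th vertex class `V_i` of the canonical `|ι|`-partite vertex set `ι × Fin n`. -/
def prt (ι : Type*) [Fintype ι] (n : ℕ) (i : ι) : Finset (ι × Fin n) :=
  Finset.univ.filter fun pq => pq.1 = i

variable {ι : Type*} [Fintype ι]

/-- `G` is partite w.r.t. `Fm`: its edges run only between vertex classes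
corresponding to edges of `Fm`. -/
def partiteOn (Fmg : SimpleGraph ι) (n : ℕ) (G : SimpleGraph (ι × Fin n)) : Prop :=
  ∀ x y, G.Adj x y → Fmg.Adj x.1 y.1

/-- number of edges of `G` between the classes `V_i` and `V_j`. -/
def ebp (n : ℕ) (G : SimpleGraph (ι × Fin n)) (i j : ι) : ℕ :=
  {pq : (ι × Fin n) × (ι × Fin n) | pq.1.1 = i ∧ pq.2.1 = j ∧ G.Adj pq.1 pq.2}.ncard

/-- `G ∈ 𝓖(Fmg, n, m, ε)`: `G` is `Fmg`-partite, with exactly `m` edges between classes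
joined by an edge of `Fmg`, all such pairs being `(ε)`-regular. -/
def inG (Fmg : SimpleGraph ι) (n m : ℕ) (ε : ℝ) (G : SimpleGraph (ι × Fin n)) : Prop :=
  partiteOn Fmg n G ∧
    ∀ i j, Fmg.Adj i j → ebp n G i j = m ∧ EpsRegular G ε (prt ι n i) (prt ι n j)

/-- `G_R` is `(F,q,ε)`-lower-regular. -/
def LowerReg (F : SimpleGraph ι) (R : Finset ι) (n : ℕ) (GR : Finset ((↥R) → Fin n))
    (q ε : ℝ) : Prop :=
  ∀ Wf : (↥R) → Finset (Fin n), (∀ i, ε * n ≤ ((Wf i).card : ℝ)) →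
    q ^ eIn F R * ∏ i, ((Wf i).card : ℝ) ≤ ((GR.filter fun e => ∀ i, e i ∈ Wf i).card : ℝ)

/-- `G_R` is `(F,q)`-upper-extensible. -/
def UpperExt (F : SimpleGraph ι) (R : Finset ι) (n : ℕ) (GR : Finset ((↥R) → Fin n))
    (q : ℝ) : Prop :=
  ∀ S : Finset ι, S ⊆ R → ∀ g : ι → Fin n,
    ((GR.filter fun e => ∀ i : ↥R, (i : ι) ∈ S → e i = g (i : ι)).card : ℝ) ≤
      q ^ (eIn F R - eIn F S) * (n : ℝ) ^ (R.card - S.card)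

/-- the number of edges, counted with multiplicity, of the multi-hypergraph `T(G, G_R)`:
for each `e ∈ G_R` the number of partite copies of `F₋` in `G` containing the vertices of `e`. -/
def Tcount (F : SimpleGraph ι) (R : Finset ι) (n : ℕ) (G : SimpleGraph (ι × Fin n))
    (GR : Finset ((↥R) → Fin n)) : ℕ :=
  ∑ e ∈ GR, {f : ι → Fin n |
      (∀ i j, (Fm F R).Adj i j → G.Adj (i, f i) (j, f j)) ∧
      ∀ i : ↥R, f (i : ι) = e i}.ncard

/-! ### The hypergraph 𝓔(G_R, F) and its co-degree function -/

/-- the edge set of the partite copy of `Fmg` given by the transversal `f`. -/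
def copyEdges (Fmg : SimpleGraph ι) {n : ℕ} (f : ι → Fin n) : Set (Sym2 (ι × Fin n)) :=
  Sym2.map (fun i => (i, f i)) '' Fmg.edgeSet

/-- the degree in `𝓔(G_R,F)` of a set `σ` of vertices (i.e. of edges of `K_{F₋,n}`):
the number of partite copies of `F₋` whose roots form an edge of `G_R` and whose
edge set contains `σ`. -/
def degI (F : SimpleGraph ι) (R : Finset ι) {n : ℕ} (GR : Finset ((↥R) → Fin n))
    (σ : Finset (Sym2 (ι × Fin n))) : ℕ :=
  {pf : ((↥R) → Fin n) × (ι → Fin n) |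
    pf.1 ∈ GR ∧ (∀ i : ↥R, pf.2 (i : ι) = pf.1 i) ∧ ↑σ ⊆ copyEdges (Fm F R) pf.2}.ncard

/-- `d^{(j)}(v)`: the maximal degree of a `j`-set containing `v`. -/
def djI (F : SimpleGraph ι) (R : Finset ι) {n : ℕ} (GR : Finset ((↥R) → Fin n))
    (jj : ℕ) (v : Sym2 (ι × Fin n)) : ℕ :=
  ⨆ σ : {σ : Finset (Sym2 (ι × Fin n)) // v ∈ σ ∧ σ.card = jj}, degI F R GR σ.1

/-- the co-degree function `δ(𝓔(G_R,F), τ)` of Saxton–Thomason. -/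
def codegFn (F : SimpleGraph ι) (R : Finset ι) {n : ℕ} (GR : Finset ((↥R) → Fin n))
    (τ : ℝ) : ℝ :=
  if (∑ v : Sym2 (ι × Fin n), degI F R GR {v}) = 0 then 0 else
    (2 : ℝ) ^ ((eCnt (Fm F R)).choose 2 - 1) *
      ∑ jj ∈ Finset.Icc 2 (eCnt (Fm F R)),
        ((∑ v : Sym2 (ι × Fin n), (djI F R GR jj v : ℝ)) /
            (τ ^ (jj - 1) * ∑ v : Sym2 (ι × Fin n), (degI F R GR {v} : ℝ))) *
          ((2 : ℝ) ^ ((jj - 1).choose 2))⁻¹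


/-! ### The online F-avoidance game -/

/-- the edges of the complete graph `K_n`. -/
abbrev En (n : ℕ) := {e : Sym2 (Fin n) // ¬ e.IsDiag}

/-- a (deterministic) Painter strategy: given the history of previously presented
edges together with their colors, and the newly presented edge, pick a color. -/
abbrev Strategy (n r : ℕ) := List (En n × Fin r) → En n → Fin r

/-- the history (presented edges with their colors, in order) after `N` rounds of
the game in which the edges arrive in the order `π` and Painter plays `σ`. -/
def histF {n r : ℕ} (σ : Strategy n r) (π : Fin (Nat.choose n 2) → En n) :
    ℕ → List (En n × Fin r)
  | 0 => []
  | i + 1 =>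
      histF σ π i ++
        if h : i < Nat.choose n 2 then
          [(π ⟨i, h⟩, σ (histF σ π i) (π ⟨i, h⟩))]
        else []

/-- the edge `e` occurs in the history `L` with color `c`. -/
def ListColored {n r : ℕ} (L : List (En n × Fin r)) (e : Sym2 (Fin n)) (c : Fin r) : Prop :=
  ∃ pr ∈ L, (pr.1 : Sym2 (Fin n)) = e ∧ pr.2 = c

/-- the graph of all edges of color `c` in the history `L`. -/
def colorGraphL {n r : ℕ} (L : List (En n × Fin r)) (c : Fin r) : SimpleGraph (Fin n) :=
  SimpleGraph.fromEdgeSet {e | ListColored L e c}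

/-- the graph of all presented edges in the history `L`. -/
def presentedGraphL {n r : ℕ} (L : List (En n × Fin r)) : SimpleGraph (Fin n) :=
  SimpleGraph.fromEdgeSet {e | ∃ c, ListColored L e c}

/-- the graph of edges colored `c` after `N` rounds. -/
def colorGraph {n r : ℕ} (σ : Strategy n r) (π : Fin (Nat.choose n 2) → En n) (N : ℕ)
    (c : Fin r) : SimpleGraph (Fin n) :=
  colorGraphL (histF σ π N) c

/-- the probability, under an edge ordering chosen uniformly at random among all
`(n choose 2)!` orderings of the edges of `K_n`, of the event `P`. -/
def gameProb (n : ℕ) (P : (Fin (Nat.choose n 2) → En n) → Prop) : ℝ :=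
  ({π : Fin (Nat.choose n 2) → En n | Function.Bijective π ∧ P π}.ncard : ℝ) /
    ({π : Fin (Nat.choose n 2) → En n | Function.Bijective π}.ncard : ℝ)

/-- some color class after `N` rounds contains a copy of the (finite) graph `F`. -/
def MonoCopy (F : Sub ℕ) {n r : ℕ} (σ : Strategy n r) (π : Fin (Nat.choose n 2) → En n)
    (N : ℕ) : Prop :=
  ∃ (c : Fin r) (φ : ℕ → Fin n), Set.InjOn φ F.verts ∧
    ∀ x y, F.Adj x y → (colorGraph σ π N c).Adj (φ x) (φ y)

/-- Painter survives `N` rounds: after `N` edges have been presented and colored,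
no color class contains a copy of `F`. -/
def Survive {α : Type*} (F : SimpleGraph α) {n r : ℕ} (σ : Strategy n r)
    (π : Fin (Nat.choose n 2) → En n) (N : ℕ) : Prop :=
  ∀ c : Fin r, ¬ ∃ φ : α ↪ Fin n, ∀ x y, F.Adj x y → (colorGraph σ π N c).Adj (φ x) (φ y)

/-! ### The binomial random graph -/

/-- probability of the event `P` for the binomial random graph `G(n,p)`. -/
def gnpProb (n : ℕ) (p : ℝ) (P : SimpleGraph (Fin n) → Prop) : ℝ :=
  ∑ G : SimpleGraph (Fin n),
    if P G then p ^ eCnt G * (1 - p) ^ (Nat.choose n 2 - eCnt G) else 0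

/-- the number of copies of the rooted graph `(ρ, G)` (with ordered roots `ρ`) spanned by
the tuple `f` in `Γ`: embeddings of `G - G[R]` carrying the roots `ρ` to `f` in order. -/
def spanCount {α : Type*} (G : SimpleGraph α) {k : ℕ} (ρ : Fin k ↪ α) {n : ℕ}
    (Γ : SimpleGraph (Fin n)) (f : Fin k ↪ Fin n) : ℕ :=
  {φ : α → Fin n | Function.Injective φ ∧ (∀ i, φ (ρ i) = f i) ∧
    ∀ x y, G.Adj x y → ¬(x ∈ Set.range ρ ∧ y ∈ Set.range ρ) → Γ.Adj (φ x) (φ y)}.ncard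

/-! ### F*-spanning subgraphs, upper uniformity -/

/-- `G` is an `F*`-spanning subgraph of `Γ` (where `F*` is rooted at `a, b`):
every edge of `G` is the root pair of a copy of `F*` in `Γ` whose non-root vertices
avoid `V(G)`, these copies being pairwise edge-disjoint. -/
def FStarSpanning {n : ℕ} (Fs : Sub ℕ) (a b : ℕ) (Γ : SimpleGraph (Fin n))
    (G : Sub (Fin n)) : Prop :=
  ∃ κ : Sym2 (Fin n) → ℕ → Fin n,
    (∀ e ∈ G.edgeSet, Set.InjOn (κ e) Fs.verts) ∧
    (∀ e ∈ G.edgeSet, ∀ x y : Fin n, e = Sym2.mk x y →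
      ({κ e a, κ e b} : Set (Fin n)) = {x, y}) ∧
    (∀ e ∈ G.edgeSet, ∀ w ∈ Fs.verts, w ≠ a → w ≠ b → κ e w ∉ G.verts) ∧
    (∀ e ∈ G.edgeSet, ∀ w w', Fs.Adj w w' → Γ.Adj (κ e w) (κ e w')) ∧
    (∀ e ∈ G.edgeSet, ∀ e' ∈ G.edgeSet, e ≠ e' →
      Disjoint (Sym2.map (κ e) '' Fs.edgeSet) (Sym2.map (κ e') '' Fs.edgeSet))

/-- number of edges of `G` from `s` to `t`. -/
def eBetween {V : Type*} (G : Sub V) (s t : Set V) : ℕ :=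
  {pq : V × V | pq.1 ∈ s ∧ pq.2 ∈ t ∧ G.Adj pq.1 pq.2}.ncard

/-- `G` is `(η,q)`-upper-uniform. -/
def UpperUniform {V : Type*} (G : Sub V) (η q : ℝ) : Prop :=
  ∀ s t : Set V, s ⊆ G.verts → t ⊆ G.verts → Disjoint s t →
    η * (nverts G : ℝ) ≤ (s.ncard : ℝ) → η * (nverts G : ℝ) ≤ (t.ncard : ℝ) →
    (eBetween G s t : ℝ) ≤ (1 + η) * q * (s.ncard : ℝ) * (t.ncard : ℝ)

/-! ### Dangerous copies -/

/-- `col` is a dangerous `r`-coloring of `F*₋` for `F* ∈ 𝓕ᵏ` (rooted at `a,b`):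
for some decomposition of `F*` as in the construction of `𝓕ᵏ`, the `k-1` copies of
`F₋` whose roots were identified in the construction are monochromatic, with pairwise
different colors. -/
def DangerousColoring (F : Sub ℕ) (u v : ℕ) (k : ℕ) (Fs : Sub ℕ) (a b : ℕ) (r : ℕ)
    (col : Sym2 ℕ → Fin r) : Prop :=
  k = 1 ∨ ∃ (P : ℕ → Sub ℕ) (c : ℕ → Fin r),
    Fs = (⨆ i ∈ Set.Ico 1 k, P i) ∧
    (∀ i ∈ Set.Ico 1 k, ∀ i' ∈ Set.Ico 1 k, i ≠ i' →
      c i ≠ c i' ∧ (P i).verts ∩ (P i').verts = {a, b}) ∧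
    ∀ i ∈ Set.Ico 1 k, ∃ (j : ℕ) (Fi : Sub ℕ) (c' d' : ℕ) (φ : ℕ → ℕ),
      1 ≤ j ∧ j ≤ i ∧ InF F u v j Fi c' d' ∧
      IsProdCopy F {u, v} Fi c' d' (P i) φ ∧ ({φ u, φ v} : Set ℕ) = {a, b} ∧
      ∀ x y, F.Adj x y → ¬(x ∈ ({u, v} : Set ℕ) ∧ y ∈ ({u, v} : Set ℕ)) →
        col (Sym2.mk (φ x) (φ y)) = c i

/-- `P` is a dangerous copy of `F × (e, F*₋)` in the colored graph after `N` rounds: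
a copy of the product of `F` (all edges of `F` being used) with `F*₋` rooted at `(a,b)`,
all of whose attached copies of `F*₋` are colored according to one and the same
dangerous coloring. -/
def IsDangerousCopy (F : Sub ℕ) (u v : ℕ) (r : ℕ) (Fs : Sub ℕ) (a b : ℕ) {n : ℕ}
    (σ : Strategy n r) (π : Fin (Nat.choose n 2) → En n) (N : ℕ) (P : Sub (Fin n)) : Prop :=
  ∃ (φ : ℕ → Fin n) (ψ : Sym2 ℕ → ℕ → Fin n) (col : Sym2 ℕ → Fin r),
    IsProdCopyData F ∅ (Fs.deleteEdges {Sym2.mk a b}) a b P φ ψ ∧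
    DangerousColoring F u v r Fs a b r col ∧
    ∀ e, NRe F ∅ e → ∀ x y, (Fs.deleteEdges {Sym2.mk a b}).Adj x y →
      ListColored (histF σ π N) (Sym2.mk (ψ e x) (ψ e y)) (col (Sym2.mk x y))

/-! ### The multi-phase game -/

/-- one phase of the multi-phase game: the edges of `K_n` are scanned in the order `π`;
those belonging to the phase graph `Gph` and not previously presented are presented to
Painter (playing `σ`), who colors them immediately. -/
def phaseStep {n r : ℕ} (σ : Strategy n r) (Gph : SimpleGraph (Fin n))
    (π : Fin (Nat.choose n 2) → En n) (init : List (En n × Fin r)) :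
    ℕ → List (En n × Fin r)
  | 0 => init
  | jj + 1 =>
      let L := phaseStep σ Gph π init jj
      if h : jj < Nat.choose n 2 then
        if (((π ⟨jj, h⟩ : En n) : Sym2 (Fin n)) ∈ Gph.edgeSet ∧
            ∀ pr ∈ L, pr.1 ≠ π ⟨jj, h⟩) then
          L ++ [(π ⟨jj, h⟩, σ L (π ⟨jj, h⟩))]
        else L
      else L

/-- the history after the first `i` phases of the multi-phase game with phase graphs `Gs`
and phase edge-orderings `πs`. -/
def multiHist {n r k : ℕ} (σ : Strategy n r) (Gs : Fin k → SimpleGraph (Fin n))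
    (πs : Fin k → Fin (Nat.choose n 2) → En n) : ℕ → List (En n × Fin r)
  | 0 => []
  | i + 1 =>
      if h : i < k then
        phaseStep σ (Gs ⟨i, h⟩) (πs ⟨i, h⟩) (multiHist σ Gs πs i) (Nat.choose n 2)
      else multiHist σ Gs πs i

/-- probability of the event `P` when `k` independent copies of `G(n,p)` are sampled,
each with an independent uniformly random ordering of the edges of `K_n`. -/
def phasesProb (n k : ℕ) (p : ℝ)
    (P : (Fin k → SimpleGraph (Fin n)) → (Fin k → Fin (Nat.choose n 2) → En n) → Prop) : ℝ :=
  (∑ Gs : Fin k → SimpleGraph (Fin n), ∑ πs : Fin k → Fin (Nat.choose n 2) → En n,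
      if (∀ i, Function.Bijective (πs i)) ∧ P Gs πs then
        ∏ i, p ^ eCnt (Gs i) * (1 - p) ^ (Nat.choose n 2 - eCnt (Gs i))
      else 0) /
    ({π : Fin (Nat.choose n 2) → En n | Function.Bijective π}.ncard : ℝ) ^ k

/-- witness data for Lemma `force regular`: a `t`-partite graph `G` with classes `parts`
of size `nn`, `m` edges between classes, monochromatic in color `col`, which is
`F*`-spanning for the member `(Fs, a, b)` of `𝓕^{≤|S|+1}`. -/
structure Wit (n r t : ℕ) where
  parts : Fin t → Finset (Fin n)
  G : Sub (Fin n)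
  col : Fin r
  nn : ℕ
  m : ℕ
  Fs : Sub ℕ
  a : ℕ
  b : ℕ

/-- validity of a witness for Lemma `force regular` (see `Wit`). -/
def WitValid (F : Sub ℕ) (u v : ℕ) {n r t k : ℕ} (S : Finset (Fin r)) (ε η pn : ℝ)
    (σ : Strategy n r) (Gs : Fin k → SimpleGraph (Fin n))
    (πs : Fin k → Fin (Nat.choose n 2) → En n) (w : Wit n r t) : Prop :=
  w.col ∉ S ∧
  (∃ jj : ℕ, 1 ≤ jj ∧ jj ≤ S.card + 1 ∧ InF F u v jj w.Fs w.a w.b) ∧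
  η * (n : ℝ) ≤ (w.nn : ℝ) ∧
  η * (n : ℝ) ^ nverts w.Fs * pn ^ nedges w.Fs ≤ (w.m : ℝ) ∧
  (∀ i, (w.parts i).card = w.nn) ∧
  (∀ i i', i ≠ i' → Disjoint (w.parts i) (w.parts i')) ∧
  (∀ x y, w.G.Adj x y → ∃ i i', i ≠ i' ∧ x ∈ w.parts i ∧ y ∈ w.parts i') ∧
  (∀ i i', i ≠ i' → eBetween w.G (↑(w.parts i)) (↑(w.parts i')) = w.m ∧
      EpsRegular w.G.spanningCoe ε (w.parts i) (w.parts i')) ∧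
  w.G.verts = ⋃ i, ↑(w.parts i) ∧
  (∀ x y, w.G.Adj x y → ListColored (multiHist σ Gs πs k) (Sym2.mk x y) w.col) ∧
  FStarSpanning w.Fs w.a w.b (presentedGraphL (multiHist σ Gs πs k)) w.G

/-- an equitable partition of `Fin n` into `rr` classes. -/
def Equitable {n rr : ℕ} (P : Fin n → Fin rr) : Prop :=
  ∀ x y : Fin rr, (P ⁻¹' {x}).ncard ≤ (P ⁻¹' {y}).ncard + 1

/-- edges of the simple graph `C` between `s` and `t`. -/
def eBetweenS {V : Type*} (C : SimpleGraph V) (s t : Set V) : ℕ :=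
  {pq : V × V | pq.1 ∈ s ∧ pq.2 ∈ t ∧ C.Adj pq.1 pq.2}.ncard

section Aux12

open SimpleGraph SimpleGraph.Subgraph

variable {W : Type*}

open SimpleGraph Subgraph Set

lemma aux_edgeSet_finite {G : Sub W} (h : G.verts.Finite) : G.edgeSet.Finite := by
  have hsub : G.edgeSet ⊆ (fun p : W × W => s(p.1, p.2)) '' (G.verts ×ˢ G.verts) := by
    intro e he
    induction e with
    | _ u w =>
      rw [Subgraph.mem_edgeSet] at he
      exact ⟨(u, w), ⟨he.fst_mem, he.snd_mem⟩, rfl⟩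
  exact ((h.prod h).image _).subset hsub

lemma aux_two_le_nverts {G : Sub W} (hfin : G.verts.Finite) (he : 1 ≤ nedges G) :
    2 ≤ nverts G := by
  have hne : G.edgeSet.Nonempty := by
    apply Set.nonempty_of_ncard_ne_zero
    have : nedges G = G.edgeSet.ncard := rfl
    omega
  obtain ⟨e, hee⟩ := hne
  induction e with
  | _ u w =>
    rw [Subgraph.mem_edgeSet] at hee
    have h2 : 1 < G.verts.ncard :=
      (Set.one_lt_ncard hfin).2 ⟨u, hee.fst_mem, w, hee.snd_mem, hee.ne⟩
    exact h2

lemma aux_nedges_le_one {G : Sub W} (h : nverts G = 2) : nedges G ≤ 1 := by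
  obtain ⟨p, q, hpq, hv⟩ := Set.ncard_eq_two.1 h
  have hsub : G.edgeSet ⊆ {s(p, q)} := by
    intro e he
    induction e with
    | _ u w =>
      rw [Subgraph.mem_edgeSet] at he
      have hu : u ∈ ({p, q} : Set W) := hv ▸ he.fst_mem
      have hw : w ∈ ({p, q} : Set W) := hv ▸ he.snd_mem
      have hne : u ≠ w := he.ne
      rcases hu with rfl | rfl <;> rcases hw with rfl | rfl <;>
        simp_all [Sym2.eq_swap]
  calc nedges G ≤ ({s(p,q)} : Set (Sym2 W)).ncard :=
        Set.ncard_le_ncard hsub (Set.finite_singleton _)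
    _ = 1 := Set.ncard_singleton _

lemma aux_d2_le {G : Sub W} {d : ℝ} (hd : 0 ≤ d) (hv : 2 ≤ nverts G)
    (h : (nedges G : ℝ) - 1 ≤ d * ((nverts G : ℝ) - 2)) : d2 G ≤ d := by
  rcases eq_or_lt_of_le hv with h2 | h3
  · have : ((nverts G : ℝ) - 2) = 0 := by rw [← h2]; norm_num
    rw [d2, this, div_zero]; exact hd
  · have hpos : (0:ℝ) < (nverts G : ℝ) - 2 := by
      have : (3:ℝ) ≤ (nverts G : ℝ) := by exact_mod_cast h3
      linarith
    rw [d2, div_le_iff₀ hpos]; linarith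

lemma aux_d2_le_m2D {G K : Sub W} (hfin : G.verts.Finite) (hK : K ≤ G)
    (he : 1 ≤ nedges K) : d2 K ≤ m2D G := by
  have hbdd : ∀ K' : {H : Sub W // H ≤ G ∧ 1 ≤ nedges H}, d2 K'.1 ≤ (nedges G : ℝ) := by
    rintro ⟨K', hK', he'⟩
    have hfin' : K'.verts.Finite := hfin.subset (verts_mono hK')
    have hv2 : 2 ≤ nverts K' := aux_two_le_nverts hfin' he'
    have hee : nedges K' ≤ nedges G :=
      Set.ncard_le_ncard (edgeSet_mono hK') (aux_edgeSet_finite hfin)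
    rcases eq_or_lt_of_le hv2 with h2 | h3
    · have : ((nverts K' : ℝ) - 2) = 0 := by rw [← h2]; norm_num
      rw [d2, this, div_zero]; positivity
    · have hpos : (0:ℝ) < (nverts K' : ℝ) - 2 := by
        have : (3:ℝ) ≤ (nverts K' : ℝ) := by exact_mod_cast h3
        linarith
      have h1 : (1:ℝ) ≤ (nverts K' : ℝ) - 2 := by
        have : (3:ℝ) ≤ (nverts K' : ℝ) := by exact_mod_cast h3
        linarith
      have hnum : (0:ℝ) ≤ (nedges K' : ℝ) - 1 := by
        have : (1:ℝ) ≤ (nedges K' : ℝ) := by exact_mod_cast he'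
        linarith
      calc ((nedges K' : ℝ) - 1) / ((nverts K' : ℝ) - 2) ≤ (nedges K' : ℝ) - 1 :=
            div_le_self hnum h1
        _ ≤ (nedges G : ℝ) := by
            have : (nedges K' : ℝ) ≤ (nedges G : ℝ) := by exact_mod_cast hee
            linarith
  exact le_ciSup ⟨(nedges G : ℝ), by rintro _ ⟨K', rfl⟩; exact hbdd K'⟩
    (⟨K, hK, he⟩ : {H : Sub W // H ≤ G ∧ 1 ≤ nedges H})

def esub (x y : W) (hxy : x ≠ y) : Sub W where
  verts := {x, y}
  Adj u w := (u = x ∧ w = y) ∨ (u = y ∧ w = x)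
  adj_sub := by rintro u w (⟨rfl, rfl⟩ | ⟨rfl, rfl⟩)
                · exact hxy
                · exact hxy.symm
  edge_vert := by rintro u w (⟨rfl, _⟩ | ⟨rfl, _⟩) <;> simp
  symm := ⟨by rintro u w (⟨rfl, rfl⟩ | ⟨rfl, rfl⟩) <;> simp⟩

lemma esub_edgeSet (x y : W) (hxy : x ≠ y) : (esub x y hxy).edgeSet = {s(x, y)} := by
  ext e
  induction e with
  | _ u w =>
    rw [Subgraph.mem_edgeSet]
    constructor
    · rintro (⟨rfl, rfl⟩ | ⟨rfl, rfl⟩)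
      · rfl
      · exact Sym2.eq_swap
    · intro h
      rw [Set.mem_singleton_iff, Sym2.eq_iff] at h
      rcases h with ⟨rfl, rfl⟩ | ⟨rfl, rfl⟩
      · exact Or.inl ⟨rfl, rfl⟩
      · exact Or.inr ⟨rfl, rfl⟩

lemma esub_le {G : Sub W} {x y : W} (hxy : x ≠ y) (h : G.Adj x y) : esub x y hxy ≤ G := by
  constructor
  · intro u hu
    rcases hu with rfl | rfl
    · exact h.fst_mem
    · exact h.snd_mem
  · rintro u w (⟨rfl, rfl⟩ | ⟨rfl, rfl⟩)
    · exact h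
    · exact h.symm

section Main

variable {G H K : Sub W} {x y : W} {d : ℝ}

lemma aux_shared_edges (hverts : G.verts ∩ H.verts = {x, y})
    (hGxy : G.Adj x y) (hHxy : H.Adj x y) :
    G.edgeSet ∩ H.edgeSet = {s(x, y)} := by
  apply Set.Subset.antisymm
  · rintro e ⟨heG, heH⟩
    induction e with
    | _ u w =>
      rw [Subgraph.mem_edgeSet] at heG heH
      have hu : u ∈ ({x, y} : Set W) := hverts ▸ Set.mem_inter heG.fst_mem heH.fst_mem
      have hw : w ∈ ({x, y} : Set W) := hverts ▸ Set.mem_inter heG.snd_mem heH.snd_mem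
      have hne : u ≠ w := heG.ne
      rcases hu with rfl | rfl <;> rcases hw with rfl | rfl <;> simp_all [Sym2.eq_swap]
  · rw [Set.singleton_subset_iff]
    exact ⟨Subgraph.mem_edgeSet.2 hGxy, Subgraph.mem_edgeSet.2 hHxy⟩

lemma aux_verts_eq (hK : K ≤ G ⊔ H) : (K ⊓ G).verts ∪ (K ⊓ H).verts = K.verts := by
  rw [verts_inf, verts_inf, ← Set.inter_union_distrib_left]
  exact Set.inter_eq_self_of_subset_left (by simpa [verts_sup] using verts_mono hK)

lemma aux_verts_inter (hverts : G.verts ∩ H.verts = {x, y}) :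
    (K ⊓ G).verts ∩ (K ⊓ H).verts = K.verts ∩ {x, y} := by
  rw [verts_inf, verts_inf, ← Set.inter_inter_distrib_left, hverts]

lemma aux_edges_eq (hK : K ≤ G ⊔ H) : (K ⊓ G).edgeSet ∪ (K ⊓ H).edgeSet = K.edgeSet := by
  rw [Subgraph.edgeSet_inf, Subgraph.edgeSet_inf, ← Set.inter_union_distrib_left]
  exact Set.inter_eq_self_of_subset_left
    (by simpa [Subgraph.edgeSet_sup] using edgeSet_mono hK)

lemma aux_edges_inter (hverts : G.verts ∩ H.verts = {x, y})
    (hGxy : G.Adj x y) (hHxy : H.Adj x y) :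
    (K ⊓ G).edgeSet ∩ (K ⊓ H).edgeSet = K.edgeSet ∩ {s(x, y)} := by
  rw [Subgraph.edgeSet_inf, Subgraph.edgeSet_inf, ← Set.inter_inter_distrib_left,
    aux_shared_edges hverts hGxy hHxy]

lemma aux_count_verts (hGfin : G.verts.Finite) (hHfin : H.verts.Finite)
    (hK : K ≤ G ⊔ H) (hverts : G.verts ∩ H.verts = {x, y}) :
    nverts (K ⊓ G) + nverts (K ⊓ H) = nverts K + (K.verts ∩ {x, y}).ncard := by
  have h := Set.ncard_union_add_ncard_inter (K ⊓ G).verts (K ⊓ H).verts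
    (hGfin.subset (verts_mono inf_le_right)) (hHfin.subset (verts_mono inf_le_right))
  rw [aux_verts_eq hK, aux_verts_inter hverts] at h
  unfold nverts
  omega

lemma aux_count_edges (hGfin : G.verts.Finite) (hHfin : H.verts.Finite)
    (hK : K ≤ G ⊔ H) (hverts : G.verts ∩ H.verts = {x, y})
    (hGxy : G.Adj x y) (hHxy : H.Adj x y) :
    nedges (K ⊓ G) + nedges (K ⊓ H) = nedges K + (K.edgeSet ∩ {s(x, y)}).ncard := by
  have h := Set.ncard_union_add_ncard_inter (K ⊓ G).edgeSet (K ⊓ H).edgeSet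
    (aux_edgeSet_finite (hGfin.subset (verts_mono inf_le_right)))
    (aux_edgeSet_finite (hHfin.subset (verts_mono inf_le_right)))
  rw [aux_edges_eq hK, aux_edges_inter hverts hGxy hHxy] at h
  unfold nedges
  omega

lemma aux_perpart (hGfin : G.verts.Finite) (hm : m2D G = d) (hd0 : 0 ≤ d)
    (hK : K ≤ G) (he : 1 ≤ nedges K) :
    (nedges K : ℝ) - 1 ≤ d * ((nverts K : ℝ) - 2) := by
  have hfin' := hGfin.subset (verts_mono hK)
  have hv := aux_two_le_nverts hfin' he
  rcases eq_or_lt_of_le hv with h2 | h3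
  · have he1 : nedges K = 1 := le_antisymm (aux_nedges_le_one h2.symm) he
    rw [he1, ← h2]
    norm_num
  · have hd2 : d2 K ≤ d := hm ▸ aux_d2_le_m2D hGfin hK he
    have hpos : (0:ℝ) < (nverts K : ℝ) - 2 := by
      have h3' : (3:ℝ) ≤ (nverts K : ℝ) := by exact_mod_cast h3
      linarith
    rw [d2, div_le_iff₀ hpos] at hd2
    exact hd2

end Main

section Main2

variable {G H K : Sub W} {x y : W} {d : ℝ}

lemma aux_core (hGfin : G.verts.Finite) (hHfin : H.verts.Finite) (hxy : x ≠ y)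
    (hverts : G.verts ∩ H.verts = {x, y}) (hGxy : G.Adj x y) (hHxy : H.Adj x y)
    (hmG : m2D G = d) (hmH : m2D H = d) (hd0 : 0 ≤ d)
    (hK : K ≤ G ⊔ H) (hmem : s(x, y) ∈ K.edgeSet) :
    (nedges K : ℝ) - 1 ≤ d * ((nverts K : ℝ) - 2) := by
  have hKadj : K.Adj x y := Subgraph.mem_edgeSet.1 hmem
  have hGmemKG : s(x, y) ∈ (K ⊓ G).edgeSet := by
    rw [Subgraph.edgeSet_inf]
    exact ⟨hmem, Subgraph.mem_edgeSet.2 hGxy⟩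
  have hGmemKH : s(x, y) ∈ (K ⊓ H).edgeSet := by
    rw [Subgraph.edgeSet_inf]
    exact ⟨hmem, Subgraph.mem_edgeSet.2 hHxy⟩
  have hKGfin : (K ⊓ G).verts.Finite := hGfin.subset (verts_mono inf_le_right)
  have hKHfin : (K ⊓ H).verts.Finite := hHfin.subset (verts_mono inf_le_right)
  have ha : 1 ≤ nedges (K ⊓ G) := (Set.ncard_pos (aux_edgeSet_finite hKGfin)).2 ⟨_, hGmemKG⟩
  have hb : 1 ≤ nedges (K ⊓ H) := (Set.ncard_pos (aux_edgeSet_finite hKHfin)).2 ⟨_, hGmemKH⟩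
  have hA := aux_perpart hGfin hmG hd0 inf_le_right ha
  have hB := aux_perpart hHfin hmH hd0 inf_le_right hb
  have hvinter : K.verts ∩ {x, y} = {x, y} :=
    Set.inter_eq_self_of_subset_right
      (Set.insert_subset hKadj.fst_mem (Set.singleton_subset_iff.2 hKadj.snd_mem))
  have heinter : K.edgeSet ∩ {s(x, y)} = {s(x, y)} :=
    Set.inter_eq_self_of_subset_right (Set.singleton_subset_iff.2 hmem)
  have hcv := aux_count_verts hGfin hHfin hK hverts
  have hce := aux_count_edges hGfin hHfin hK hverts hGxy hHxy
  rw [hvinter, Set.ncard_pair hxy] at hcv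
  rw [heinter, Set.ncard_singleton] at hce
  have hcv' : (nverts (K ⊓ G) : ℝ) + (nverts (K ⊓ H) : ℝ) = (nverts K : ℝ) + 2 := by
    exact_mod_cast hcv
  have hce' : (nedges (K ⊓ G) : ℝ) + (nedges (K ⊓ H) : ℝ) = (nedges K : ℝ) + 1 := by
    exact_mod_cast hce
  have hring : d * ((nverts (K ⊓ G) : ℝ) - 2) + d * ((nverts (K ⊓ H) : ℝ) - 2) =
      d * (((nverts (K ⊓ G) : ℝ) + (nverts (K ⊓ H) : ℝ)) - 4) := by ring
  rw [hcv'] at hring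
  have hring2 : d * (((nverts K : ℝ) + 2) - 4) = d * ((nverts K : ℝ) - 2) := by ring
  linarith [hA, hB]

lemma aux_side (hGfin : G.verts.Finite) (hHfin : H.verts.Finite)
    (hverts : G.verts ∩ H.verts = {x, y}) (hGxy : G.Adj x y) (hHxy : H.Adj x y)
    (hmH : m2D H = d) (hd0 : 0 ≤ d)
    (hK : K ≤ G ⊔ H) (he : 1 ≤ nedges K) (ha : nedges (K ⊓ G) = 0) :
    (nedges K : ℝ) - 1 ≤ d * ((nverts K : ℝ) - 2) := by
  have hKfin : K.verts.Finite := by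
    apply (hGfin.union hHfin).subset
    simpa [verts_sup] using verts_mono hK
  have hKGe : (K ⊓ G).edgeSet = ∅ := by
    rw [← Set.ncard_eq_zero (aux_edgeSet_finite (hGfin.subset (verts_mono inf_le_right)))]
    exact ha
  -- the shared-edge count is 0 since it is contained in (K ⊓ G).edgeSet
  have hsub : K.edgeSet ∩ {s(x, y)} ⊆ (K ⊓ G).edgeSet := by
    rw [Subgraph.edgeSet_inf]
    rintro e ⟨heK, hee⟩
    rw [Set.mem_singleton_iff] at hee
    subst hee
    exact ⟨heK, Subgraph.mem_edgeSet.2 hGxy⟩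
  have hs0 : (K.edgeSet ∩ {s(x, y)}).ncard = 0 := by
    rw [Set.ncard_eq_zero (Set.Finite.subset (by rw [hKGe]; exact Set.finite_empty) hsub)]
    exact Set.subset_empty_iff.1 (hKGe ▸ hsub)
  have hce := aux_count_edges hGfin hHfin hK hverts hGxy hHxy
  rw [hs0, ha] at hce
  -- so nedges (K ⊓ H) = nedges K
  have hb : 1 ≤ nedges (K ⊓ H) := by omega
  have hB := aux_perpart hHfin hmH hd0 inf_le_right hb
  have hq : nverts (K ⊓ H) ≤ nverts K :=
    Set.ncard_le_ncard (verts_mono inf_le_left) hKfin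
  have hq' : (nverts (K ⊓ H) : ℝ) ≤ (nverts K : ℝ) := by exact_mod_cast hq
  have he' : (nedges (K ⊓ H) : ℝ) = (nedges K : ℝ) := by
    have : nedges (K ⊓ H) = nedges K := by omega
    exact_mod_cast this
  have hmul : d * ((nverts (K ⊓ H) : ℝ) - 2) ≤ d * ((nverts K : ℝ) - 2) :=
    mul_le_mul_of_nonneg_left (by linarith) hd0
  linarith

end Main2

section Main3

variable {G H K : Sub W} {x y : W} {d : ℝ}

lemma aux_side' (hGfin : G.verts.Finite) (hHfin : H.verts.Finite)
    (hverts : G.verts ∩ H.verts = {x, y}) (hGxy : G.Adj x y) (hHxy : H.Adj x y)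
    (hmG : m2D G = d) (hd0 : 0 ≤ d)
    (hK : K ≤ G ⊔ H) (he : 1 ≤ nedges K) (hb : nedges (K ⊓ H) = 0) :
    (nedges K : ℝ) - 1 ≤ d * ((nverts K : ℝ) - 2) :=
  aux_side hHfin hGfin (by rw [Set.inter_comm]; exact hverts) hHxy hGxy hmG hd0
    (by rwa [sup_comm] at hK) he hb

lemma aux_main (hGfin : G.verts.Finite) (hHfin : H.verts.Finite) (hxy : x ≠ y)
    (hverts : G.verts ∩ H.verts = {x, y}) (hGxy : G.Adj x y) (hHxy : H.Adj x y)
    (hmG : m2D G = d) (hmH : m2D H = d) (hd0 : 0 ≤ d)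
    (hK : K ≤ G ⊔ H) (he : 1 ≤ nedges K) :
    (nedges K : ℝ) - 1 ≤ d * ((nverts K : ℝ) - 2) := by
  by_cases hmem : s(x, y) ∈ K.edgeSet
  · exact aux_core hGfin hHfin hxy hverts hGxy hHxy hmG hmH hd0 hK hmem
  have hKfin : K.verts.Finite := by
    apply (hGfin.union hHfin).subset
    simpa [verts_sup] using verts_mono hK
  have hK'le : K ⊔ esub x y hxy ≤ G ⊔ H :=
    sup_le hK (le_trans (esub_le hxy hGxy) le_sup_left)
  have hK'edge : (K ⊔ esub x y hxy).edgeSet = insert s(x, y) K.edgeSet := by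
    rw [Subgraph.edgeSet_sup, esub_edgeSet, Set.union_singleton]
  have hK'e : nedges (K ⊔ esub x y hxy) = nedges K + 1 := by
    unfold nedges
    rw [hK'edge, Set.ncard_insert_of_notMem hmem (aux_edgeSet_finite hKfin)]
  have hK'verts : (K ⊔ esub x y hxy).verts = K.verts ∪ {x, y} := by
    rw [verts_sup]; rfl
  have hcore := aux_core hGfin hHfin hxy hverts hGxy hHxy hmG hmH hd0 hK'le
      (by rw [hK'edge]; exact Set.mem_insert _ _)
  have hs0 : (K.edgeSet ∩ {s(x, y)}).ncard = 0 := by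
    rw [Set.inter_singleton_eq_empty.2 hmem, Set.ncard_empty]
  have hcv := aux_count_verts hGfin hHfin hK hverts
  have hce := aux_count_edges hGfin hHfin hK hverts hGxy hHxy
  rw [hs0] at hce
  -- case analysis on which of x, y lie in K.verts
  by_cases hx : x ∈ K.verts <;> by_cases hy : y ∈ K.verts
  · -- both roots present
    have hnv : nverts (K ⊔ esub x y hxy) = nverts K := by
      unfold nverts
      rw [hK'verts, Set.union_eq_left.2
        (Set.insert_subset hx (Set.singleton_subset_iff.2 hy))]
    rw [hK'e, hnv] at hcore
    push_cast at hcore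
    linarith
  · -- only x present
    rcases le_total d 1 with hd1 | hd1
    · have hnv : nverts (K ⊔ esub x y hxy) = nverts K + 1 := by
        unfold nverts
        rw [hK'verts]
        have huni : K.verts ∪ {x, y} = insert y K.verts := by
          ext u
          simp only [Set.mem_union, Set.mem_insert_iff, Set.mem_singleton_iff]
          constructor
          · rintro (h | rfl | rfl)
            exacts [Or.inr h, Or.inr hx, Or.inl rfl]
          · rintro (rfl | h)
            exacts [Or.inr (Or.inr rfl), Or.inl h]
        rw [huni, Set.ncard_insert_of_notMem hy hKfin]
      rw [hK'e, hnv] at hcore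
      push_cast at hcore
      have hexp : d * ((nverts K : ℝ) + 1 - 2) = d * ((nverts K : ℝ) - 2) + d := by ring
      linarith
    · -- 1 ≤ d : split into the two parts
      rcases Nat.eq_zero_or_pos (nedges (K ⊓ G)) with ha0 | ha1
      · exact aux_side hGfin hHfin hverts hGxy hHxy hmH hd0 hK he ha0
      rcases Nat.eq_zero_or_pos (nedges (K ⊓ H)) with hb0 | hb1
      · exact aux_side' hGfin hHfin hverts hGxy hHxy hmG hd0 hK he hb0
      have hvinter : K.verts ∩ {x, y} = {x} := by
        ext u
        simp only [Set.mem_inter_iff, Set.mem_insert_iff, Set.mem_singleton_iff]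
        constructor
        · rintro ⟨hu, rfl | rfl⟩
          · rfl
          · exact absurd hu hy
        · rintro rfl
          exact ⟨hx, Or.inl rfl⟩
      rw [hvinter, Set.ncard_singleton] at hcv
      have hA := aux_perpart hGfin hmG hd0 inf_le_right ha1
      have hB := aux_perpart hHfin hmH hd0 inf_le_right hb1
      have hcv' : (nverts (K ⊓ G) : ℝ) + (nverts (K ⊓ H) : ℝ) = (nverts K : ℝ) + 1 := by
        exact_mod_cast hcv
      have hce' : (nedges (K ⊓ G) : ℝ) + (nedges (K ⊓ H) : ℝ) = (nedges K : ℝ) := by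
        exact_mod_cast hce
      have hring : d * ((nverts (K ⊓ G) : ℝ) - 2) + d * ((nverts (K ⊓ H) : ℝ) - 2) =
          d * (((nverts (K ⊓ G) : ℝ) + (nverts (K ⊓ H) : ℝ)) - 4) := by ring
      rw [hcv'] at hring
      have hring2 : d * (((nverts K : ℝ) + 1) - 4) = d * ((nverts K : ℝ) - 2) - d := by ring
      linarith
  · -- only y present
    rcases le_total d 1 with hd1 | hd1
    · have hnv : nverts (K ⊔ esub x y hxy) = nverts K + 1 := by
        unfold nverts
        rw [hK'verts]
        have huni : K.verts ∪ {x, y} = insert x K.verts := by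
          ext u
          simp only [Set.mem_union, Set.mem_insert_iff, Set.mem_singleton_iff]
          constructor
          · rintro (h | rfl | rfl)
            exacts [Or.inr h, Or.inl rfl, Or.inr hy]
          · rintro (rfl | h)
            exacts [Or.inr (Or.inl rfl), Or.inl h]
        rw [huni, Set.ncard_insert_of_notMem hx hKfin]
      rw [hK'e, hnv] at hcore
      push_cast at hcore
      have hexp : d * ((nverts K : ℝ) + 1 - 2) = d * ((nverts K : ℝ) - 2) + d := by ring
      linarith
    · rcases Nat.eq_zero_or_pos (nedges (K ⊓ G)) with ha0 | ha1
      · exact aux_side hGfin hHfin hverts hGxy hHxy hmH hd0 hK he ha0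
      rcases Nat.eq_zero_or_pos (nedges (K ⊓ H)) with hb0 | hb1
      · exact aux_side' hGfin hHfin hverts hGxy hHxy hmG hd0 hK he hb0
      have hvinter : K.verts ∩ {x, y} = {y} := by
        ext u
        simp only [Set.mem_inter_iff, Set.mem_insert_iff, Set.mem_singleton_iff]
        constructor
        · rintro ⟨hu, rfl | rfl⟩
          · exact absurd hu hx
          · rfl
        · rintro rfl
          exact ⟨hy, Or.inr rfl⟩
      rw [hvinter, Set.ncard_singleton] at hcv
      have hA := aux_perpart hGfin hmG hd0 inf_le_right ha1
      have hB := aux_perpart hHfin hmH hd0 inf_le_right hb1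
      have hcv' : (nverts (K ⊓ G) : ℝ) + (nverts (K ⊓ H) : ℝ) = (nverts K : ℝ) + 1 := by
        exact_mod_cast hcv
      have hce' : (nedges (K ⊓ G) : ℝ) + (nedges (K ⊓ H) : ℝ) = (nedges K : ℝ) := by
        exact_mod_cast hce
      have hring : d * ((nverts (K ⊓ G) : ℝ) - 2) + d * ((nverts (K ⊓ H) : ℝ) - 2) =
          d * (((nverts (K ⊓ G) : ℝ) + (nverts (K ⊓ H) : ℝ)) - 4) := by ring
      rw [hcv'] at hring
      have hring2 : d * (((nverts K : ℝ) + 1) - 4) = d * ((nverts K : ℝ) - 2) - d := by ring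
      linarith
  · -- no root present
    rcases le_total (2 * d) 1 with hd1 | hd1
    · have hnv : nverts (K ⊔ esub x y hxy) = nverts K + 2 := by
        unfold nverts
        rw [hK'verts]
        have huni : K.verts ∪ {x, y} = insert x (insert y K.verts) := by
          ext u
          simp only [Set.mem_union, Set.mem_insert_iff, Set.mem_singleton_iff]
          tauto
        rw [huni, Set.ncard_insert_of_notMem (by simp [hx, hxy]) (hKfin.insert y),
          Set.ncard_insert_of_notMem hy hKfin]
      rw [hK'e, hnv] at hcore
      push_cast at hcore
      have hexp : d * ((nverts K : ℝ) + 2 - 2) = d * ((nverts K : ℝ) - 2) + 2 * d := by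
        ring
      linarith
    · rcases Nat.eq_zero_or_pos (nedges (K ⊓ G)) with ha0 | ha1
      · exact aux_side hGfin hHfin hverts hGxy hHxy hmH hd0 hK he ha0
      rcases Nat.eq_zero_or_pos (nedges (K ⊓ H)) with hb0 | hb1
      · exact aux_side' hGfin hHfin hverts hGxy hHxy hmG hd0 hK he hb0
      have hvinter : K.verts ∩ {x, y} = ∅ := by
        ext u
        simp only [Set.mem_inter_iff, Set.mem_insert_iff, Set.mem_singleton_iff,
          Set.mem_empty_iff_false, iff_false, not_and]
        rintro hu (rfl | rfl)
        exacts [hx hu, hy hu]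
      rw [hvinter, Set.ncard_empty] at hcv
      have hA := aux_perpart hGfin hmG hd0 inf_le_right ha1
      have hB := aux_perpart hHfin hmH hd0 inf_le_right hb1
      have hcv' : (nverts (K ⊓ G) : ℝ) + (nverts (K ⊓ H) : ℝ) = (nverts K : ℝ) := by
        exact_mod_cast hcv
      have hce' : (nedges (K ⊓ G) : ℝ) + (nedges (K ⊓ H) : ℝ) = (nedges K : ℝ) := by
        exact_mod_cast hce
      have hring : d * ((nverts (K ⊓ G) : ℝ) - 2) + d * ((nverts (K ⊓ H) : ℝ) - 2) =
          d * (((nverts (K ⊓ G) : ℝ) + (nverts (K ⊓ H) : ℝ)) - 4) := by ring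
      rw [hcv'] at hring
      have hring2 : d * ((nverts K : ℝ) - 4) = d * ((nverts K : ℝ) - 2) - 2 * d := by ring
      linarith

end Main3

end Aux12

open SimpleGraph SimpleGraph.Subgraph

theorem stmt12 {W : Type} (G H : Sub W) (hGfin : G.verts.Finite) (hHfin : H.verts.Finite)
    (hG : TwoBalanced G) (hH : TwoBalanced H)
    (hmeet : ∃ x y : W, x ≠ y ∧ G.verts ∩ H.verts = {x, y} ∧ G.Adj x y ∧ H.Adj x y)
    (d : ℝ) (hdG : m2D G = d) (hdH : m2D H = d) :
    TwoBalanced (G ⊔ H) ∧ m2D (G ⊔ H) = d := by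
  obtain ⟨x, y, hxy, hverts, hGxy, hHxy⟩ := hmeet
  have hUfin : (G ⊔ H).verts.Finite := by rw [verts_sup]; exact hGfin.union hHfin
  have hGe : s(x, y) ∈ G.edgeSet := Subgraph.mem_edgeSet.2 hGxy
  have hHe : s(x, y) ∈ H.edgeSet := Subgraph.mem_edgeSet.2 hHxy
  have heG : 1 ≤ nedges G := (Set.ncard_pos (aux_edgeSet_finite hGfin)).2 ⟨_, hGe⟩
  have heH : 1 ≤ nedges H := (Set.ncard_pos (aux_edgeSet_finite hHfin)).2 ⟨_, hHe⟩
  have hesuble : esub x y hxy ≤ G := esub_le hxy hGxy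
  have hesube : nedges (esub x y hxy) = 1 := by
    unfold nedges
    rw [esub_edgeSet]
    exact Set.ncard_singleton _
  have hesubv : nverts (esub x y hxy) = 2 := by
    unfold nverts
    exact Set.ncard_pair hxy
  have hd2esub : d2 (esub x y hxy) = 0 := by rw [d2, hesube, hesubv]; norm_num
  have hd0 : 0 ≤ d := by
    calc (0:ℝ) = d2 (esub x y hxy) := hd2esub.symm
      _ ≤ m2D G := aux_d2_le_m2D hGfin hesuble hesube.ge
      _ = d := hdG
  have hEcap : G.edgeSet ∩ H.edgeSet = {s(x, y)} := aux_shared_edges hverts hGxy hHxy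
  have hcv : nverts G + nverts H = nverts (G ⊔ H) + 2 := by
    have h := Set.ncard_union_add_ncard_inter G.verts H.verts hGfin hHfin
    rw [hverts, Set.ncard_pair hxy] at h
    unfold nverts
    rw [verts_sup] at *
    omega
  have hce : nedges G + nedges H = nedges (G ⊔ H) + 1 := by
    have h := Set.ncard_union_add_ncard_inter G.edgeSet H.edgeSet
      (aux_edgeSet_finite hGfin) (aux_edgeSet_finite hHfin)
    rw [hEcap, Set.ncard_singleton] at h
    unfold nedges
    rw [Subgraph.edgeSet_sup] at *
    omega
  have hGeq : (nedges G : ℝ) - 1 = d * ((nverts G : ℝ) - 2) := by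
    have h2 := aux_two_le_nverts hGfin heG
    have hd2G : d2 G = d := hG.symm.trans hdG
    rcases eq_or_lt_of_le h2 with hv2 | hv3
    · have he1 : nedges G = 1 := le_antisymm (aux_nedges_le_one hv2.symm) heG
      rw [he1, ← hv2]
      norm_num
    · have hpos : (0:ℝ) < (nverts G : ℝ) - 2 := by
        have h3' : (3:ℝ) ≤ (nverts G : ℝ) := by exact_mod_cast hv3
        linarith
      rw [d2, div_eq_iff (ne_of_gt hpos)] at hd2G
      exact hd2G
  have hHeq : (nedges H : ℝ) - 1 = d * ((nverts H : ℝ) - 2) := by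
    have h2 := aux_two_le_nverts hHfin heH
    have hd2H : d2 H = d := hH.symm.trans hdH
    rcases eq_or_lt_of_le h2 with hv2 | hv3
    · have he1 : nedges H = 1 := le_antisymm (aux_nedges_le_one hv2.symm) heH
      rw [he1, ← hv2]
      norm_num
    · have hpos : (0:ℝ) < (nverts H : ℝ) - 2 := by
        have h3' : (3:ℝ) ≤ (nverts H : ℝ) := by exact_mod_cast hv3
        linarith
      rw [d2, div_eq_iff (ne_of_gt hpos)] at hd2H
      exact hd2H
  have hcv' : (nverts G : ℝ) + (nverts H : ℝ) = (nverts (G ⊔ H) : ℝ) + 2 := by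
    exact_mod_cast hcv
  have hce' : (nedges G : ℝ) + (nedges H : ℝ) = (nedges (G ⊔ H) : ℝ) + 1 := by
    exact_mod_cast hce
  have hUeq : (nedges (G ⊔ H) : ℝ) - 1 = d * ((nverts (G ⊔ H) : ℝ) - 2) := by
    have hring : d * ((nverts G : ℝ) - 2) + d * ((nverts H : ℝ) - 2) =
        d * (((nverts G : ℝ) + (nverts H : ℝ)) - 4) := by ring
    rw [hcv'] at hring
    have hring2 : d * (((nverts (G ⊔ H) : ℝ) + 2) - 4) =
        d * ((nverts (G ⊔ H) : ℝ) - 2) := by ring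
    linarith
  have heU : 1 ≤ nedges (G ⊔ H) := by omega
  have hUv2 := aux_two_le_nverts hUfin heU
  have hd2U : d2 (G ⊔ H) = d := by
    rcases eq_or_lt_of_le hUv2 with hv2 | hv3
    · have hvG2 : nverts G ≤ 2 := by
        calc nverts G ≤ nverts (G ⊔ H) :=
              Set.ncard_le_ncard (verts_mono le_sup_left) hUfin
          _ = 2 := hv2.symm
      have hle : m2D G ≤ 0 := by
        have hnon : Nonempty {K : Sub W // K ≤ G ∧ 1 ≤ nedges K} :=
          ⟨⟨esub x y hxy, hesuble, hesube.ge⟩⟩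
        apply ciSup_le
        rintro ⟨K, hKle, hKe⟩
        have hKfin := hGfin.subset (verts_mono hKle)
        have hKv : nverts K = 2 :=
          le_antisymm (le_trans (Set.ncard_le_ncard (verts_mono hKle) hGfin) hvG2)
            (aux_two_le_nverts hKfin hKe)
        have hKe1 : nedges K = 1 := le_antisymm (aux_nedges_le_one hKv) hKe
        rw [d2, hKv, hKe1]
        norm_num
      have hd00 : d = 0 := le_antisymm (hdG ▸ hle) hd0
      rw [d2, ← hv2, hd00]
      norm_num
    · have hpos : (0:ℝ) < (nverts (G ⊔ H) : ℝ) - 2 := by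
        have h3' : (3:ℝ) ≤ (nverts (G ⊔ H) : ℝ) := by exact_mod_cast hv3
        linarith
      rw [d2, div_eq_iff (ne_of_gt hpos)]
      exact hUeq
  have hmain : ∀ K : Sub W, K ≤ G ⊔ H → 1 ≤ nedges K → d2 K ≤ d := by
    intro K hK he
    have hKfin : K.verts.Finite := hUfin.subset (verts_mono hK)
    exact aux_d2_le hd0 (aux_two_le_nverts hKfin he)
      (aux_main hGfin hHfin hxy hverts hGxy hHxy hdG hdH hd0 hK he)
  have hup : m2D (G ⊔ H) ≤ d := by
    have hnon : Nonempty {K : Sub W // K ≤ G ⊔ H ∧ 1 ≤ nedges K} :=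
      ⟨⟨G ⊔ H, le_rfl, heU⟩⟩
    exact ciSup_le fun K => hmain K.1 K.2.1 K.2.2
  have hlow : d ≤ m2D (G ⊔ H) := by
    rw [← hd2U]
    exact aux_d2_le_m2D hUfin le_rfl heU
  have hm : m2D (G ⊔ H) = d := le_antisymm hup hlow
  exact ⟨hm.trans hd2U.symm, hm⟩


end OG
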